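/- For every x ∈ ℝ^d, the subdifferential of f_K at x equals the translate of the convex hull of the optimality class: ∂f_K(x) = conv(opt_K(x)) − x; moreover, the unique element of minimal norm of ∂f_K(x) (the extended gradient ∇f_K(x)) equals η_K(x) − x, where η_K(x) is the unique nearest point to x in conv(opt_K(x)). -/

import Mathlib

open scoped RealInnerProductSpace

noncomputable section

/-- The optimality class of `x` w.r.t. `K`: the points of `K` at minimal distance from `x`. -/
def optClass {d : ℕ} (K : Set (EuclideanSpace ℝ (Fin d))) (x : EuclideanSpace ℝ (Fin d)) :
    Set (EuclideanSpace ℝ (Fin d)) :=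
  {y ∈ K | dist x y = Metric.infDist x K}

/-- The subdifferential of a `(-1)`-convex function `f : ℝ^d → ℝ` at `x`:
`∂f(x) = {ξ : f(y) ≥ f(x) + ⟪ξ, y - x⟫ - ‖y - x‖²/2 for all y}`. -/
def subdiffM {d : ℕ} (f : EuclideanSpace ℝ (Fin d) → ℝ) (x : EuclideanSpace ℝ (Fin d)) :
    Set (EuclideanSpace ℝ (Fin d)) :=
  {ξ | ∀ y, f x + ⟪ξ, y - x⟫ - ‖y - x‖ ^ 2 / 2 ≤ f y}

section Aux

open Metric Set Filter

variable {d : ℕ}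

local notation "E" => EuclideanSpace ℝ (Fin d)

/-- The convex hull of a compact nonempty set in Euclidean space is compact (Carathéodory). -/
lemma isCompact_convexHull_of_isCompact' {s : Set E} (hs : IsCompact s) (hne : s.Nonempty) :
    IsCompact (convexHull ℝ s) := by
  classical
  obtain ⟨s₀, hs₀⟩ := hne
  set N := d + 1 with hN
  let g : (Fin N → ℝ) × (Fin N → E) → E := fun p => ∑ i, p.1 i • p.2 i
  have hg : Continuous g := by
    apply continuous_finset_sum
    intro i _
    exact ((continuous_apply i).comp continuous_fst).smul
      ((continuous_apply i).comp continuous_snd)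
  have hT : IsCompact ((stdSimplex ℝ (Fin N)) ×ˢ (Set.univ.pi fun _ : Fin N => s)) :=
    (isCompact_stdSimplex ℝ (Fin N)).prod (isCompact_univ_pi fun _ => hs)
  have himg : convexHull ℝ s = g '' ((stdSimplex ℝ (Fin N)) ×ˢ (Set.univ.pi fun _ : Fin N => s)) := by
    apply Set.Subset.antisymm
    · intro x hx
      rw [convexHull_eq_union] at hx
      simp only [Set.mem_iUnion] at hx
      obtain ⟨t, hts, hai, hxt⟩ := hx
      have hm : t.card ≤ N := by
        have h1 : Fintype.card ↥(t : Set E) ≤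
            Module.finrank ℝ (vectorSpan ℝ (Set.range ((↑) : ↥(t : Set E) → E))) + 1 :=
          hai.card_le_finrank_succ
        have h2 : Module.finrank ℝ (vectorSpan ℝ (Set.range ((↑) : ↥(t : Set E) → E))) ≤
            Module.finrank ℝ E := Submodule.finrank_le _
        have h3 : Fintype.card ↥(t : Set E) = t.card := by simp
        have h4 : Module.finrank ℝ E = d := finrank_euclideanSpace_fin
        omega
      rw [Finset.convexHull_eq] at hxt
      obtain ⟨w, hw0, hw1, hwx⟩ := hxt
      rw [Finset.centerMass_eq_of_sum_1 _ _ hw1] at hwx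
      set m := t.card with hmdef
      let e : Fin m ≃ ↥t := t.equivFin.symm
      have key : ∀ {M : Type} [AddCommMonoid M] (F : ↥t → M), (∑ i : Fin N,
          if h : (i : ℕ) < m then F (e ⟨i, h⟩) else 0) = ∑ y : ↥t, F y := by
        intro M _ F
        rw [← Equiv.sum_comp e F]
        let emb : Fin m ↪ Fin N := Fin.castLEEmb hm
        rw [← Finset.sum_subset (Finset.subset_univ (Finset.univ.map emb)) ?h0]
        · rw [Finset.sum_map]
          apply Finset.sum_congr rfl
          intro j _
          have hj : ((emb j : Fin N) : ℕ) < m := by simp [emb]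
          rw [dif_pos hj]
          exact congrArg (F ∘ e) (Fin.ext (by simp [emb]))
        · intro i _ hi
          rw [dif_neg]
          intro h
          exact hi (Finset.mem_map.mpr ⟨⟨(i : ℕ), h⟩, Finset.mem_univ _, by ext; simp [emb]⟩)
      let W : Fin N → ℝ := fun i => if h : (i : ℕ) < m then w (e ⟨i, h⟩) else 0
      let Z : Fin N → E := fun i => if h : (i : ℕ) < m then ((e ⟨i, h⟩ : ↥t) : E) else s₀
      have hWsum : ∑ i, W i = 1 := by
        have := key (fun y : ↥t => w ↑y)
        rw [Finset.sum_coe_sort t w] at this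
        simpa [W] using this.trans hw1
      have hWpos : ∀ i, 0 ≤ W i := by
        intro i
        by_cases h : (i : ℕ) < m
        · simp only [W, dif_pos h]; exact hw0 _ (Finset.coe_mem _)
        · simp [W, dif_neg h]
      have hZs : ∀ i, Z i ∈ s := by
        intro i
        by_cases h : (i : ℕ) < m
        · simp only [Z, dif_pos h]; exact hts (Finset.coe_mem _)
        · simp only [Z, dif_neg h]; exact hs₀
      have hgx : g (W, Z) = x := by
        have h1 : ∀ i : Fin N, W i • Z i =
            if h : (i : ℕ) < m then (fun y : ↥t => w ↑y • (y : E)) (e ⟨i, h⟩) else 0 := by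
          intro i
          by_cases h : (i : ℕ) < m
          · simp [W, Z, dif_pos h]
          · simp [W, Z, dif_neg h]
        have h2 := key (fun y : ↥t => w ↑y • (y : E))
        have h3 : ∑ y : ↥t, w ↑y • (y : E) = ∑ y ∈ t, w y • y :=
          Finset.sum_coe_sort t (fun y => w y • y)
        calc g (W, Z) = ∑ i : Fin N, W i • Z i := rfl
          _ = ∑ y ∈ t, w y • y := by rw [Finset.sum_congr rfl fun i _ => h1 i, h2, h3]
          _ = x := by simpa using hwx
      exact ⟨(W, Z), ⟨⟨hWpos, hWsum⟩, fun i _ => hZs i⟩, hgx⟩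
    · rintro x ⟨⟨W, Z⟩, ⟨hWmem, hZmem⟩, rfl⟩
      refine Convex.sum_mem (convex_convexHull ℝ s) (fun i _ => hWmem.1 i) hWmem.2 ?_
      intro i _
      exact subset_convexHull ℝ s (hZmem i trivial)
  rw [himg]
  exact hT.image hg

lemma optClass_isCompact (K : Set E) (hKcl : IsClosed K) (x : E) :
    IsCompact (optClass K x) := by
  have hsub : optClass K x ⊆ Metric.closedBall x (Metric.infDist x K) := by
    intro y hy
    exact Metric.mem_closedBall'.mpr (le_of_eq hy.2)
  have hcl : IsClosed (optClass K x) := by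
    have : optClass K x = K ∩ (fun y => dist x y) ⁻¹' {Metric.infDist x K} := rfl
    rw [this]
    exact hKcl.inter (isClosed_singleton.preimage (continuous_const.dist continuous_id))
  exact (isCompact_closedBall x _).of_isClosed_subset hcl hsub

lemma subdiffM_convex (f : E → ℝ) (x : E) : Convex ℝ (subdiffM f x) := by
  intro a ha b hb p q hp hq hpq
  intro y
  have h1 := ha y
  have h2 := hb y
  have hin : ⟪p • a + q • b, y - x⟫ = p * ⟪a, y - x⟫ + q * ⟪b, y - x⟫ := by
    rw [inner_add_left, real_inner_smul_left, real_inner_smul_left]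
  rw [hin]
  have hkey : f x + (p * ⟪a, y - x⟫ + q * ⟪b, y - x⟫) - ‖y - x‖ ^ 2 / 2
      = p * (f x + ⟪a, y - x⟫ - ‖y - x‖ ^ 2 / 2) + q * (f x + ⟪b, y - x⟫ - ‖y - x‖ ^ 2 / 2) := by
    linear_combination (‖y - x‖ ^ 2 / 2 - f x) * hpq
  rw [hkey]
  have H := add_le_add (mul_le_mul_of_nonneg_left h1 hp) (mul_le_mul_of_nonneg_left h2 hq)
  rw [← add_mul, hpq, one_mul] at H
  exact H

lemma opt_sub_mem_subdiff (K : Set E) (x k : E) (hk : k ∈ optClass K x) :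
    k - x ∈ subdiffM (fun y => -(Metric.infDist y K ^ 2) / 2) x := by
  intro y
  simp only
  have h1 : Metric.infDist y K ≤ dist y k := Metric.infDist_le_dist_of_mem hk.1
  have h0 : 0 ≤ Metric.infDist y K := Metric.infDist_nonneg
  have h3 : -(dist y k ^ 2) / 2 ≤ -(Metric.infDist y K ^ 2) / 2 := by nlinarith
  have h2 : dist x k = Metric.infDist x K := hk.2
  have hxk : dist x k = ‖k - x‖ := by rw [dist_eq_norm, norm_sub_rev]
  have hyk : dist y k = ‖(y - x) - (k - x)‖ := by rw [dist_eq_norm]; congr 1; abel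
  have hexp : ‖(y - x) - (k - x)‖ ^ 2 =
      ‖y - x‖ ^ 2 - 2 * ⟪y - x, k - x⟫ + ‖k - x‖ ^ 2 := norm_sub_sq_real _ _
  have hcomm : ⟪k - x, y - x⟫ = ⟪y - x, k - x⟫ := real_inner_comm _ _
  rw [← h2, hxk]
  nlinarith [hyk, hexp]

lemma subdiff_subset_hull (K : Set E) (hKne : K.Nonempty) (hKcl : IsClosed K) (x ξ : E)
    (hξ : ξ ∈ subdiffM (fun y => -(Metric.infDist y K ^ 2) / 2) x) :
    x + ξ ∈ convexHull ℝ (optClass K x) := by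
  by_contra hmem
  obtain ⟨k₀, hk₀K, hk₀d⟩ := hKcl.exists_infDist_eq_dist hKne x
  have hoptne : (optClass K x).Nonempty := ⟨k₀, hk₀K, hk₀d.symm⟩
  have hCc : IsCompact (convexHull ℝ (optClass K x)) :=
    isCompact_convexHull_of_isCompact' (optClass_isCompact K hKcl x) hoptne
  obtain ⟨f, u, hfu, hu⟩ :=
    geometric_hahn_banach_closed_point (convex_convexHull ℝ _) hCc.isClosed hmem
  set v : E := (InnerProductSpace.toDual ℝ _).symm f with hvdef
  have hv : ∀ w : E, ⟪v, w⟫ = f w := fun w => InnerProductSpace.toDual_symm_apply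
  have hex : ∀ n : ℕ, ∃ k ∈ K,
      Metric.infDist (x + ((n : ℝ) + 1)⁻¹ • v) K = dist (x + ((n : ℝ) + 1)⁻¹ • v) k :=
    fun n => hKcl.exists_infDist_eq_dist hKne _
  choose k hkK hkd using hex
  have hfle : ∀ n : ℕ, f (x + ξ) ≤ f (k n) := by
    intro n
    set t : ℝ := ((n : ℝ) + 1)⁻¹ with htdef
    have ht : 0 < t := by positivity
    have hsub := hξ (x + t • v)
    simp only at hsub
    have he1 : (x + t • v) - x = t • v := by abel
    rw [he1, real_inner_smul_right] at hsub
    have he2 : ‖t • v‖ ^ 2 = t ^ 2 * ‖v‖ ^ 2 := by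
      rw [norm_smul, Real.norm_eq_abs, abs_of_pos ht, mul_pow]
    rw [he2] at hsub
    have hA : 0 ≤ Metric.infDist x K := Metric.infDist_nonneg
    have hAB : Metric.infDist x K ≤ dist x (k n) := Metric.infDist_le_dist_of_mem (hkK n)
    have hd2 : dist (x + t • v) (k n) ^ 2 =
        dist x (k n) ^ 2 + 2 * (t * ⟪x - k n, v⟫) + t ^ 2 * ‖v‖ ^ 2 := by
      have h1 : (x + t • v) - k n = (x - k n) + t • v := by abel
      rw [dist_eq_norm, h1, norm_add_sq_real, real_inner_smul_right, ← dist_eq_norm,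
        norm_smul, Real.norm_eq_abs, abs_of_pos ht, mul_pow]
    rw [hkd n, hd2] at hsub
    have hts : t * (⟪ξ, v⟫ + ⟪x - k n, v⟫) ≤ 0 := by nlinarith
    have hs0 : ⟪ξ, v⟫ + ⟪x - k n, v⟫ ≤ 0 := by
      by_contra hpos
      push_neg at hpos
      nlinarith
    have hexp : ⟪x - k n, v⟫ = ⟪v, x⟫ - ⟪v, k n⟫ := by
      rw [real_inner_comm, inner_sub_right]
    have hxiv : f (x + ξ) = ⟪v, x⟫ + ⟪v, ξ⟫ := by rw [← hv, inner_add_right]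
    have hvξ : ⟪ξ, v⟫ = ⟪v, ξ⟫ := real_inner_comm _ _
    rw [← hv (k n), hxiv]
    linarith [hs0, hexp ▸ hs0]
  have hbd : ∀ n : ℕ, dist x (k n) ≤ Metric.infDist x K + 2 * (((n : ℝ) + 1)⁻¹ * ‖v‖) := by
    intro n
    set t : ℝ := ((n : ℝ) + 1)⁻¹ with htdef
    have ht : 0 < t := by positivity
    have h1 : dist x (k n) ≤ dist x (x + t • v) + dist (x + t • v) (k n) := dist_triangle _ _ _
    have h2 : dist x (x + t • v) = t * ‖v‖ := by
      rw [dist_eq_norm]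
      simp [norm_smul, abs_of_pos ht]
    have h3 : dist (x + t • v) (k n) ≤ Metric.infDist x K + t * ‖v‖ := by
      rw [← hkd n]
      calc Metric.infDist (x + t • v) K ≤ Metric.infDist x K + dist (x + t • v) x :=
            Metric.infDist_le_infDist_add_dist
        _ = Metric.infDist x K + t * ‖v‖ := by rw [dist_comm]; rw [h2]
    linarith
  have hmemS : ∀ n : ℕ, k n ∈ K ∩ Metric.closedBall x (Metric.infDist x K + 2 * ‖v‖) := by
    intro n
    refine ⟨hkK n, Metric.mem_closedBall'.mpr ?_⟩
    have ht1 : ((n : ℝ) + 1)⁻¹ ≤ 1 := by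
      rw [inv_le_one_iff₀]; right; linarith [Nat.cast_nonneg (α := ℝ) n]
    have := hbd n
    have hv0 : 0 ≤ ‖v‖ := norm_nonneg v
    nlinarith
  have hScompact : IsCompact (K ∩ Metric.closedBall x (Metric.infDist x K + 2 * ‖v‖)) :=
    (isCompact_closedBall x _).of_isClosed_subset
      (hKcl.inter Metric.isClosed_closedBall) (Set.inter_subset_right)
  obtain ⟨z, hzS, φ, hφ, hlim⟩ := hScompact.tendsto_subseq hmemS
  have htend : Tendsto (fun n : ℕ => ((φ n : ℝ) + 1)⁻¹) atTop (nhds 0) := by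
    have h1 : Tendsto (fun n : ℕ => ((n : ℝ) + 1)⁻¹) atTop (nhds 0) := by
      simpa [one_div] using tendsto_one_div_add_atTop_nhds_zero_nat (𝕜 := ℝ)
    exact h1.comp hφ.tendsto_atTop
  have hd1 : Tendsto (fun n => dist x (k (φ n))) atTop (nhds (dist x z)) :=
    tendsto_const_nhds.dist hlim
  have hd2 : Tendsto (fun n : ℕ => Metric.infDist x K + 2 * (((φ n : ℝ) + 1)⁻¹ * ‖v‖)) atTop
      (nhds (Metric.infDist x K)) := by
    have : Tendsto (fun n : ℕ => 2 * (((φ n : ℝ) + 1)⁻¹ * ‖v‖)) atTop (nhds 0) := by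
      simpa using (htend.mul_const ‖v‖).const_mul 2
    simpa using tendsto_const_nhds.add this
  have hdle : dist x z ≤ Metric.infDist x K :=
    le_of_tendsto_of_tendsto' hd1 hd2 fun n => hbd (φ n)
  have hzopt : z ∈ optClass K x :=
    ⟨hzS.1, le_antisymm hdle (Metric.infDist_le_dist_of_mem hzS.1)⟩
  have hflim : Tendsto (fun n => f (k (φ n))) atTop (nhds (f z)) :=
    (f.continuous.tendsto z).comp hlim
  have hfz : f (x + ξ) ≤ f z := ge_of_tendsto' hflim fun n => hfle (φ n)
  have := hfu z (subset_convexHull ℝ _ hzopt)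
  linarith

end Aux

/-- For `f_K(x) = -dist_K(x)²/2`, the subdifferential is `∂f_K(x) = conv(opt_K(x)) - x`, and
the unique element of minimal norm of `∂f_K(x)` (the extended gradient `∇f_K(x)`) is
`η_K(x) - x`, where `η_K(x)` is the unique nearest point to `x` in `conv(opt_K(x))`. -/
theorem subdiff_fK_eq {d : ℕ} (K : Set (EuclideanSpace ℝ (Fin d))) (hKne : K.Nonempty)
    (hKcl : IsClosed K) (x : EuclideanSpace ℝ (Fin d)) :
    subdiffM (fun y => -(Metric.infDist y K ^ 2) / 2) x =
      (fun z => z - x) '' convexHull ℝ (optClass K x) ∧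
    ∀ η : EuclideanSpace ℝ (Fin d), η ∈ convexHull ℝ (optClass K x) →
      (∀ z ∈ convexHull ℝ (optClass K x), dist x η ≤ dist x z) →
      (η - x ∈ subdiffM (fun y => -(Metric.infDist y K ^ 2) / 2) x ∧
        (∀ ξ ∈ subdiffM (fun y => -(Metric.infDist y K ^ 2) / 2) x, ‖η - x‖ ≤ ‖ξ‖) ∧
        ∀ ξ ∈ subdiffM (fun y => -(Metric.infDist y K ^ 2) / 2) x, ‖ξ‖ = ‖η - x‖ → ξ = η - x) := by
  have hset : subdiffM (fun y => -(Metric.infDist y K ^ 2) / 2) x =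
      (fun z => z - x) '' convexHull ℝ (optClass K x) := by
    apply Set.Subset.antisymm
    · intro ξ hξ
      exact ⟨x + ξ, subdiff_subset_hull K hKne hKcl x ξ hξ, by simp⟩
    · rintro _ ⟨z, hz, rfl⟩
      have hsub : convexHull ℝ (optClass K x) ⊆
          {z | z - x ∈ subdiffM (fun y => -(Metric.infDist y K ^ 2) / 2) x} := by
        apply convexHull_min
        · intro k hk
          exact opt_sub_mem_subdiff K x k hk
        · intro a ha b hb p q hp hq hpq
          have hmem := subdiffM_convex (fun y => -(Metric.infDist y K ^ 2) / 2) x ha hb hp hq hpq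
          have heq : (p • a + q • b) - x = p • (a - x) + q • (b - x) := by
            have hx : (p + q) • x = x := by rw [hpq, one_smul]
            rw [smul_sub, smul_sub]
            rw [show p • a - p • x + (q • b - q • x) = p • a + q • b - (p + q) • x by
              rw [add_smul]; abel, hx]
          simp only [Set.mem_setOf_eq]
          rw [heq]
          exact hmem
      exact hsub hz
  refine ⟨hset, ?_⟩
  intro η hη hmin
  have hdist : ∀ a : EuclideanSpace ℝ (Fin d), ‖a - x‖ = dist x a := fun a => by
    rw [dist_eq_norm, norm_sub_rev]
  refine ⟨?_, ?_, ?_⟩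
  · rw [hset]
    exact ⟨η, hη, rfl⟩
  · intro ξ hξ
    rw [hset] at hξ
    obtain ⟨z, hz, rfl⟩ := hξ
    rw [hdist, hdist]
    exact hmin z hz
  · intro ξ hξ heq
    rw [hset] at hξ
    obtain ⟨z, hz, rfl⟩ := hξ
    have hmem : (1 / 2 : ℝ) • η + (1 / 2 : ℝ) • z ∈ convexHull ℝ (optClass K x) :=
      (convex_convexHull ℝ _) hη hz (by norm_num) (by norm_num) (by norm_num)
    have hm := hmin _ hmem
    have hxm : dist x ((1 / 2 : ℝ) • η + (1 / 2 : ℝ) • z) =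
        (1 / 2 : ℝ) * ‖(η - x) + (z - x)‖ := by
      rw [← hdist]
      have h1 : (1 / 2 : ℝ) • η + (1 / 2 : ℝ) • z - x = (1 / 2 : ℝ) • ((η - x) + (z - x)) := by
        rw [smul_add, smul_sub, smul_sub]
        rw [show (1 / 2 : ℝ) • η - (1 / 2 : ℝ) • x + ((1 / 2 : ℝ) • z - (1 / 2 : ℝ) • x)
            = (1 / 2 : ℝ) • η + (1 / 2 : ℝ) • z - ((1 / 2 : ℝ) + (1 / 2 : ℝ)) • x by
          rw [add_smul]; abel]
        norm_num
      rw [h1, norm_smul, Real.norm_eq_abs]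
      norm_num
    rw [← hdist η] at hm
    rw [hxm] at hm
    have hpar1 : ‖(η - x) + (z - x)‖ ^ 2 =
        ‖η - x‖ ^ 2 + 2 * ⟪η - x, z - x⟫ + ‖z - x‖ ^ 2 := norm_add_sq_real _ _
    have hpar2 : ‖(η - x) - (z - x)‖ ^ 2 =
        ‖η - x‖ ^ 2 - 2 * ⟪η - x, z - x⟫ + ‖z - x‖ ^ 2 := norm_sub_sq_real _ _
    have hn1 : 0 ≤ ‖η - x‖ := norm_nonneg _
    have hn2 : 0 ≤ ‖(η - x) + (z - x)‖ := norm_nonneg _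
    have hsq : ‖(η - x) - (z - x)‖ ^ 2 ≤ 0 := by nlinarith
    have hzero : ‖(η - x) - (z - x)‖ ^ 2 = 0 := le_antisymm hsq (sq_nonneg _)
    have h0 : (η - x) - (z - x) = 0 := by
      have := (pow_eq_zero_iff two_ne_zero).mp hzero
      exact norm_eq_zero.mp this
    have : η - x = z - x := by
      rw [sub_eq_zero] at h0
      exact h0
    exact this.symm
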